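/- arXiv:1811.05257 — 3 statements merged into one kernel-verified Lean document; each statement's English description precedes it below -/
import Mathlib

section
/- Let s₁, ..., s_n ≥ 1 be integers, K a field containing a primitive p^s-th root of unity with s = max{s₁,...,s_n}, and α₁, ..., α_n ∈ K such that [K(α₁^{1/p^{s₁}}, ..., α_n^{1/p^{s_n}}) : K] = p^{s₁+...+s_n}. Then for every i ≥ 2, the class of α_i in K*/(K*)^p does not belong to the subgroup generated by the classes of α₁, ..., α_{i−1}. -/
open IntermediateField Polynomial

lemma adjoin_image_finrank_le {K Ω ι : Type*} [Field K] [Field Ω] [Algebra K Ω]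
    [DecidableEq ι] (t : Finset ι) (b : ι → Ω) (d : ι → ℕ)
    (hd : ∀ j ∈ t, 0 < d j)
    (h : ∀ j ∈ t, ∃ a : K, b j ^ d j = algebraMap K Ω a) :
    Module.finrank K (adjoin K (b '' ↑t)) ≤ ∏ j ∈ t, d j := by
  classical
  induction t using Finset.induction with
  | empty =>
      rw [show (b '' (↑(∅:Finset ι))) = (∅ : Set Ω) by simp,
        IntermediateField.adjoin_empty K Ω, IntermediateField.finrank_bot, Finset.prod_empty]
  | @insert j t hjt ih =>
      rw [Finset.coe_insert, Set.image_insert_eq, Set.insert_eq, Set.union_comm,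
        ← IntermediateField.adjoin_adjoin_left]
      set E := adjoin K (b '' ↑t) with hE
      obtain ⟨a, ha⟩ := h j (Finset.mem_insert_self j t)
      have haE : algebraMap K Ω a ∈ E := E.algebraMap_mem a
      have hdj : 0 < d j := hd j (Finset.mem_insert_self j t)
      set e : E := ⟨algebraMap K Ω a, haE⟩ with he
      have hq : (Polynomial.aeval (b j)) (X ^ d j - C e) = 0 := by
        rw [map_sub, map_pow, aeval_X, aeval_C, ha]
        have : (algebraMap E Ω) e = algebraMap K Ω a := rfl
        rw [this, sub_self]
      have hmonic : (X ^ d j - C e).Monic := monic_X_pow_sub_C e hdj.ne'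
      have hint : IsIntegral E (b j) := ⟨X ^ d j - C e, hmonic, hq⟩
      have hfr : Module.finrank E (adjoin E {b j}) ≤ d j := by
        rw [IntermediateField.adjoin.finrank hint]
        have := Polynomial.natDegree_le_natDegree
          (minpoly.degree_le_of_ne_zero E (b j) hmonic.ne_zero hq)
        rwa [natDegree_X_pow_sub_C] at this
      have htower : Module.finrank K ((adjoin E {b j}).restrictScalars K)
          = Module.finrank K E * Module.finrank E (adjoin E {b j}) :=
        (Module.finrank_mul_finrank K E (adjoin E {b j})).symm
      rw [htower, Finset.prod_insert hjt]
      have ih' := ih (fun k hk => hd k (Finset.mem_insert_of_mem hk))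
        (fun k hk => h k (Finset.mem_insert_of_mem hk))
      calc Module.finrank K E * Module.finrank E (adjoin E {b j})
          ≤ (∏ k ∈ t, d k) * d j := Nat.mul_le_mul ih' hfr
        _ = d j * ∏ k ∈ t, d k := Nat.mul_comm _ _


/-- Let `s₁, ..., s_n ≥ 1`, `K` a field containing a primitive `p^s`-th root of unity with
`s = max sᵢ`, and `α₁, ..., α_n ∈ K` such that
`[K(α₁^{1/p^{s₁}}, ..., α_n^{1/p^{s_n}}) : K] = p^{s₁+...+s_n}`.  Then for every `i ≥ 2`
the class of `αᵢ` in `K*/(K*)^p` does not belong to the subgroup generated by the classes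
of `α₁, ..., α_{i-1}`. -/
theorem kummer_independence_of_maximal_degree (p : ℕ) (hp : p.Prime)
    (K Ω : Type*) [Field K] [Field Ω] [Algebra K Ω]
    (n : ℕ) (s : Fin n → ℕ) (hs : ∀ i, 1 ≤ s i)
    (ζ : K) (hζ : IsPrimitiveRoot ζ (p ^ Finset.univ.sup s))
    (α : Fin n → K) (β : Fin n → Ω)
    (hβ : ∀ i, β i ^ (p ^ s i) = algebraMap K Ω (α i))
    (hdeg : Module.finrank K ↥(IntermediateField.adjoin K (Set.range β)) = p ^ (∑ i, s i)) :
    ∀ i : Fin n, 0 < (i : ℕ) →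
      ¬∃ (c : K) (x : Fin n → ℤ),
        α i = c ^ p * ∏ j ∈ Finset.univ.filter (fun j => j < i), α j ^ x j := by
  classical
  intro i hi
  rintro ⟨c, x, hxc⟩
  have hp1 : 1 < p := hp.one_lt
  haveI : NeZero p := ⟨hp.ne_zero⟩
  -- all α j are nonzero
  have hαne : ∀ j, α j ≠ 0 := by
    intro j hj0
    have hβ0 : β j = 0 := by
      have h1 := hβ j
      rw [hj0, map_zero] at h1
      exact (pow_eq_zero_iff (pow_ne_zero _ hp.ne_zero)).mp h1
    have hbound := adjoin_image_finrank_le (K := K) (Ω := Ω) Finset.univ β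
      (fun k => if k = j then 1 else p ^ s k)
      (fun k _ => by by_cases h : k = j <;> simp [h, pow_pos hp.pos])
      (fun k _ => by
        by_cases h : k = j
        · exact ⟨0, by simp [h, hβ0]⟩
        · exact ⟨α k, by simp [h, hβ k]⟩)
    rw [Finset.coe_univ, Set.image_univ, hdeg] at hbound
    have hprod : ∏ k, (if k = j then 1 else p ^ s k)
        = p ^ (∑ k ∈ Finset.univ.erase j, s k) := by
      rw [← Finset.mul_prod_erase Finset.univ _ (Finset.mem_univ j), if_pos rfl, one_mul,
        Finset.prod_congr rfl (fun k hk => if_neg (Finset.ne_of_mem_erase hk)),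
        Finset.prod_pow_eq_pow_sum]
    rw [hprod] at hbound
    have hsum : ∑ k ∈ Finset.univ.erase j, s k < ∑ k, s k := by
      have h2 := Finset.add_sum_erase Finset.univ s (Finset.mem_univ j)
      have := hs j; omega
    exact absurd hbound (not_le.mpr (Nat.pow_lt_pow_right hp1 hsum))
  have hβne : ∀ j, β j ≠ 0 := by
    intro j h0
    apply hαne j
    have h1 := hβ j
    rw [h0, zero_pow (pow_ne_zero _ hp.ne_zero)] at h1
    exact ((_root_.map_eq_zero (algebraMap K Ω)).mp h1.symm)
  -- primitive p-th root of unity in K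
  set S := Finset.univ.sup s with hSdef
  have hS1 : 1 ≤ S := le_trans (hs i) (Finset.le_sup (Finset.mem_univ i))
  have hζ0 : IsPrimitiveRoot (ζ ^ p ^ (S - 1)) p :=
    hζ.pow (pow_pos hp.pos S) (by rw [← pow_succ]; congr 1; omega)
  have hζΩ : IsPrimitiveRoot (algebraMap K Ω (ζ ^ p ^ (S - 1))) p :=
    hζ0.map_of_injective (algebraMap K Ω).injective
  -- the field L generated by the β_j, j ≠ i
  set t : Finset (Fin n) := Finset.univ.erase i with htdef
  set L : IntermediateField K Ω := adjoin K (β '' ↑t) with hLdef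
  have hL : Module.finrank K L ≤ p ^ (∑ j ∈ t, s j) := by
    have h1 := adjoin_image_finrank_le t β (fun j => p ^ s j)
      (fun j _ => pow_pos hp.pos _) (fun j _ => ⟨α j, hβ j⟩)
    rwa [Finset.prod_pow_eq_pow_sum] at h1
  -- the explicit p-th root of α i built from the β_j, j < i
  set γ' : Ω := algebraMap K Ω c *
    ∏ j ∈ Finset.univ.filter (fun j => j < i), β j ^ ((p : ℤ) ^ (s j - 1) * x j) with hγ'def
  have hγ'p : γ' ^ p = algebraMap K Ω (α i) := by
    rw [hγ'def, hxc, map_mul, map_pow, mul_pow]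
    congr 1
    rw [map_prod, ← Finset.prod_pow]
    refine Finset.prod_congr rfl (fun j hj => ?_)
    rw [map_zpow₀, ← hβ j, ← zpow_natCast (β j ^ ((p : ℤ) ^ (s j - 1) * x j)) p,
      ← zpow_mul, ← zpow_natCast (β j) (p ^ s j), ← zpow_mul]
    congr 1
    have h2 : ((p : ℤ) ^ (s j - 1)) * p = (p : ℤ) ^ s j := by
      rw [← pow_succ]; congr 1; have := hs j; omega
    push_cast
    rw [mul_right_comm, h2]
  set γ : Ω := β i ^ p ^ (s i - 1) with hγdef
  have hγp : γ ^ p = algebraMap K Ω (α i) := by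
    rw [hγdef, ← pow_mul, ← pow_succ, show s i - 1 + 1 = s i by have := hs i; omega, hβ i]
  have hc : c ≠ 0 := by
    intro h
    apply hαne i
    rw [hxc, h, zero_pow hp.ne_zero, zero_mul]
  have hγ'ne : γ' ≠ 0 :=
    mul_ne_zero ((map_ne_zero (algebraMap K Ω)).mpr hc)
      (Finset.prod_ne_zero_iff.mpr fun j _ => zpow_ne_zero _ (hβne j))
  have hup : (γ / γ') ^ p = 1 := by
    rw [div_pow, hγp, hγ'p, div_self ((map_ne_zero (algebraMap K Ω)).mpr (hαne i))]
  obtain ⟨k, -, hk⟩ := hζΩ.eq_pow_of_pow_eq_one hup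
  have hγeq : γ = algebraMap K Ω ((ζ ^ p ^ (S - 1)) ^ k) * γ' := by
    rw [map_pow, hk, div_mul_cancel₀ _ hγ'ne]
  -- γ lies in L
  have hγL : γ ∈ L := by
    rw [hγeq, hγ'def]
    refine mul_mem (L.algebraMap_mem _) (mul_mem (L.algebraMap_mem c) ?_)
    refine prod_mem fun j hj => ?_
    have hji : j < i := (Finset.mem_filter.mp hj).2
    have hjmem : β j ∈ L := by
      rw [hLdef]
      exact IntermediateField.subset_adjoin K (β '' ↑t)
        ⟨j, Finset.mem_coe.mpr (Finset.mem_erase.mpr ⟨ne_of_lt hji, Finset.mem_univ j⟩), rfl⟩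
    exact zpow_mem hjmem _
  -- degree of the full field over L is at most p^(s i - 1)
  set M : IntermediateField L Ω := adjoin L (β '' ↑(Finset.univ : Finset (Fin n))) with hMdef
  have hM : Module.finrank L M ≤ p ^ (s i - 1) := by
    have h1 := adjoin_image_finrank_le (K := L) (Ω := Ω)
      (Finset.univ : Finset (Fin n)) β (fun j => if j = i then p ^ (s i - 1) else 1)
      (fun j _ => by by_cases h : j = i <;> simp [h, pow_pos hp.pos])
      (fun j _ => by
        by_cases h : j = i
        · subst h
          exact ⟨⟨γ, hγL⟩, by simp [hγdef]⟩
        · have hjL : β j ∈ L := IntermediateField.subset_adjoin K _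
            ⟨j, Finset.mem_coe.mpr (Finset.mem_erase.mpr ⟨h, Finset.mem_univ j⟩), rfl⟩
          exact ⟨⟨β j, hjL⟩, by simp [h]⟩)
    rwa [Finset.prod_ite_eq' Finset.univ i (fun _ => p ^ (s i - 1)),
      if_pos (Finset.mem_univ i)] at h1
  -- tower law
  have hres : M.restrictScalars K = adjoin K (Set.range β) := by
    rw [hMdef, hLdef, IntermediateField.adjoin_adjoin_left]
    congr 1
    rw [Finset.coe_univ, Set.image_univ]
    exact Set.union_eq_self_of_subset_left (Set.image_subset_range β ↑t)
  have htower : Module.finrank K (adjoin K (Set.range β))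
      = Module.finrank K L * Module.finrank L M := by
    rw [← hres]
    exact (Module.finrank_mul_finrank K L M).symm
  have hfinal : p ^ (∑ j, s j) ≤ p ^ ((∑ j, s j) - 1) := by
    calc p ^ (∑ j, s j) = Module.finrank K (adjoin K (Set.range β)) := hdeg.symm
      _ = Module.finrank K L * Module.finrank L M := htower
      _ ≤ p ^ (∑ j ∈ t, s j) * p ^ (s i - 1) := Nat.mul_le_mul hL hM
      _ = p ^ ((∑ j ∈ t, s j) + (s i - 1)) := (pow_add p _ _).symm
      _ = p ^ ((∑ j, s j) - 1) := by
          congr 1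
          have h2 := Finset.add_sum_erase Finset.univ s (Finset.mem_univ i)
          rw [← htdef] at h2
          have := hs i; omega
  have hlt : (∑ j, s j) - 1 < ∑ j, s j := by
    have h3 : 1 ≤ ∑ j, s j :=
      le_trans (hs i) (Finset.single_le_sum (fun _ _ => Nat.zero_le _) (Finset.mem_univ i))
    omega
  exact absurd hfinal (not_le.mpr (Nat.pow_lt_pow_right hp1 hlt))
end

section
/- Let F/ℚ₂ be a finite unramified extension, b ∈ F with b ∉ F² and −b ∉ F², and β a fourth root of b in an algebraic closure of F. Then F(β)/F is not a Galois extension. -/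
/-- The `ℤ_[p]`-algebra structure on a field `L` over `ℚ_[p]`. -/
noncomputable def padicIntAlgebra (p : ℕ) [Fact p.Prime] (L : Type*) [Field L]
    [Algebra ℚ_[p] L] : Algebra ℤ_[p] L :=
  ((algebraMap ℚ_[p] L).comp (algebraMap ℤ_[p] ℚ_[p])).toAlgebra

/-- The ring of integers of a `p`-adic field `L`, i.e. the integral closure of `ℤ_[p]` in `L`. -/
noncomputable def ringOfInt (p : ℕ) [Fact p.Prime] (L : Type*) [Field L]
    [Algebra ℚ_[p] L] : Subring L :=
  letI := padicIntAlgebra p L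
  (integralClosure ℤ_[p] L).toSubring

/-- The maximal ideal of the ring of integers of `L` (its Jacobson radical). -/
noncomputable def maxIdeal (p : ℕ) [Fact p.Prime] (L : Type*) [Field L]
    [Algebra ℚ_[p] L] : Ideal (ringOfInt p L) :=
  (⊥ : Ideal (ringOfInt p L)).jacobson

/-- The `i`-th ramification group (in lower numbering) of `L/K`, as a subset of `Gal(L/K)`:
`σ ∈ G_i` iff `σ x - x ∈ 𝔭_L ^ (i+1)` for every `x` in the ring of integers of `L`. -/
noncomputable def ramSet (p : ℕ) [Fact p.Prime] (K L : Type*) [Field K] [Field L]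
    [Algebra ℚ_[p] L] [Algebra K L] (i : ℕ) : Set (L ≃ₐ[K] L) :=
  {σ | ∀ x : ringOfInt p L, ∃ y ∈ maxIdeal p L ^ (i + 1), (y : L) = σ (x : L) - (x : L)}

/-- `t` is a ramification jump of `L/K` if `G_t ≠ G_{t+1}`. -/
noncomputable def IsRamJump (p : ℕ) [Fact p.Prime] (K L : Type*) [Field K] [Field L]
    [Algebra ℚ_[p] L] [Algebra K L] (t : ℕ) : Prop :=
  ramSet p K L t ≠ ramSet p K L (t + 1)

/-- `L/K` has a unique ramification jump, equal to `t`. -/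
noncomputable def HasUniqueRamJump (p : ℕ) [Fact p.Prime] (K L : Type*) [Field K] [Field L]
    [Algebra ℚ_[p] L] [Algebra K L] (t : ℕ) : Prop :=
  IsRamJump p K L t ∧ ∀ t', IsRamJump p K L t' → t' = t

/-- Same as `HasUniqueRamJump`, with the `K`-algebra structure on `L` given by an
explicit ring homomorphism. -/
noncomputable def HasUniqueRamJumpHom (p : ℕ) [Fact p.Prime] (K L : Type*) [Field K] [Field L]
    [Algebra ℚ_[p] L] (f : K →+* L) (t : ℕ) : Prop :=
  letI := f.toAlgebra
  HasUniqueRamJump p K L t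

/-- The absolute ramification index `e(L|ℚ_p)`, i.e. the valuation of `p` in `L`. -/
noncomputable def eAbs (p : ℕ) [Fact p.Prime] (L : Type*) [Field L] [Algebra ℚ_[p] L] : ℕ :=
  sSup {n : ℕ | Ideal.span {(p : ringOfInt p L)} ≤ maxIdeal p L ^ n}

/-- The normalized valuation `v_L(x)` of an integral element `x` of `L`. -/
noncomputable def valInt (p : ℕ) [Fact p.Prime] (L : Type*) [Field L] [Algebra ℚ_[p] L]
    (x : L) : ℕ :=
  sSup {n : ℕ | ∃ y ∈ maxIdeal p L ^ n, (y : L) = x}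

set_option synthInstance.maxHeartbeats 1000000
set_option maxHeartbeats 2000000

open Polynomial IntermediateField Module

section Helpers

lemma no_sqrt_neg_one (F : Type*) [Field F] [Algebra ℚ_[2] F]
    (hunram : maxIdeal 2 F = Ideal.span {(2 : ringOfInt 2 F)})
    (t : F) (ht : t ^ 2 = -1) : False := by
  letI := padicIntAlgebra 2 F
  have hchar : CharZero F := charZero_of_injective_algebraMap (algebraMap ℚ_[2] F).injective
  have hti : t ∈ ringOfInt 2 F := by
    refine ⟨X ^ 2 + 1, by monicity!, ?_⟩
    simp only [eval₂_add, eval₂_pow, eval₂_X, eval₂_one]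
    rw [ht]; ring
  have hui : (1 + t) ∈ ringOfInt 2 F := by
    refine ⟨X ^ 2 - Polynomial.C 2 * X + Polynomial.C 2, by monicity!, ?_⟩
    have h2 : ((algebraMap ℤ_[2] F) 2) = 2 := by
      show algebraMap ℚ_[2] F ((2 : ℤ_[2]) : ℚ_[2]) = 2
      exact map_ofNat _ 2
    simp only [eval₂_add, eval₂_sub, eval₂_mul, eval₂_pow, eval₂_X, eval₂_C, h2]
    linear_combination ht
  set O := ringOfInt 2 F
  set u : O := ⟨1 + t, hui⟩ with hu
  set tO : O := ⟨t, hti⟩ with htO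
  have h2ne : (2 : O) ≠ 0 := by
    intro h
    have : ((2 : O) : F) = 0 := by rw [h]; rfl
    norm_num at this
  have h2c : ((2 : O) : F) = 2 := by norm_cast
  have hu2 : u ^ 2 = 2 * tO := by
    ext
    push_cast [h2c]
    linear_combination ht
  have humem : u ∈ Ideal.span {(2 : O)} := by
    rw [← hunram]
    have h1 : u ^ 2 ∈ maxIdeal 2 F := by
      rw [hunram, hu2]
      exact Ideal.mem_span_singleton.mpr ⟨tO, rfl⟩
    have h2 : u ∈ (maxIdeal 2 F).radical := ⟨2, h1⟩
    have h3 : (maxIdeal 2 F).radical ≤ maxIdeal 2 F := by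
      have := Ideal.radical_le_jacobson (I := maxIdeal 2 F)
      rwa [maxIdeal, Ideal.jacobson_idem] at this
    exact h3 h2
  obtain ⟨v, hv⟩ := Ideal.mem_span_singleton.mp humem
  have h4 : 2 * tO = 2 * (2 * v ^ 2) := by
    rw [← hu2, hv]; ring
  have ht2 : tO = 2 * v ^ 2 := mul_left_cancel₀ h2ne h4
  have hunit : tO * (-tO) = 1 := by
    ext; push_cast; linear_combination -ht
  have hone : (1 : O) ∈ Ideal.span {(2 : O)} := by
    rw [← hunit, ht2]
    exact Ideal.mem_span_singleton.mpr ⟨v ^ 2 * -(2 * v ^ 2), by ring⟩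
  rw [← hunram, maxIdeal] at hone
  have := Ideal.mem_jacobson_bot.mp hone (-1)
  simp at this

lemma quad_extract {K L : Type*} [Field K] [Field L] [Algebra K L]
    (pb : PowerBasis K L) (hdim : pb.dim = 2) (y : L) :
    ∃ c d : K, y = algebraMap K L c + d • pb.gen := by
  obtain ⟨f, hf, rfl⟩ := pb.exists_eq_aeval y
  rw [hdim] at hf
  have hdeg : f.degree ≤ 1 := by
    rcases eq_or_ne f 0 with rfl | h0
    · simp
    · exact (Polynomial.degree_eq_natDegree h0).le.trans (by exact_mod_cast Nat.lt_succ_iff.mp hf)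
  refine ⟨f.coeff 0, f.coeff 1, ?_⟩
  conv_lhs => rw [Polynomial.eq_X_add_C_of_degree_le_one hdeg]
  rw [map_add, map_mul, aeval_C, aeval_X, aeval_C, Algebra.smul_def, add_comm, mul_comm]

lemma quartic_irred {F : Type*} [Field F] [CharZero F] (b : F)
    (hb1 : ¬∃ c : F, c ^ 2 = b) (hb2 : ¬∃ c : F, c ^ 2 = -b) :
    Irreducible (X ^ 4 - C b) := by
  have hsq : Irreducible (X ^ 2 - C b) :=
    X_pow_sub_C_irreducible_of_prime Nat.prime_two (fun c hc => hb1 ⟨c, hc⟩)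
  have h4 : (4 : ℕ) = 2 * 2 := rfl
  rw [h4]
  apply X_pow_mul_sub_C_irreducible hsq
  intro E _ _ x hx
  have hxint : IsIntegral F x := by
    by_contra h
    rw [minpoly.eq_zero h] at hx
    exact (X_pow_sub_C_ne_zero (by norm_num) b) hx.symm
  apply X_pow_sub_C_irreducible_of_prime Nat.prime_two
  intro y hy
  set g := AdjoinSimple.gen F x with hg
  have hming : minpoly F g = X ^ 2 - C b := by rw [minpoly_gen, hx]
  have hg2 : g ^ 2 = algebraMap F F⟮x⟯ b := by
    have := minpoly.aeval F g
    rw [hming] at this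
    simp only [map_sub, map_pow, aeval_X, aeval_C] at this
    linear_combination this
  set pb := adjoin.powerBasis hxint with hpb
  have hdim : pb.dim = 2 := by
    simp [hpb, adjoin.powerBasis_dim, hx]
  obtain ⟨c, d, hcd⟩ := quad_extract pb hdim y
  have hgen : pb.gen = g := by simp [hpb, adjoin.powerBasis_gen, hg]
  rw [hgen] at hcd
  set A := algebraMap F F⟮x⟯ with hA
  have hAinj : Function.Injective A := (algebraMap F F⟮x⟯).injective
  have key : A (c ^ 2 + d ^ 2 * b) = A (1 - 2 * c * d) * g := by
    have hy' : (A c + d • g) ^ 2 = g := by rw [← hcd]; exact hy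
    rw [Algebra.smul_def] at hy'
    simp only [map_add, map_sub, map_mul, map_pow, map_one, map_ofNat]
    linear_combination hy' - (A d) ^ 2 * hg2
  rcases eq_or_ne (1 - 2 * c * d) 0 with h0 | h0
  · have hd : d ≠ 0 := by
      intro hd; rw [hd] at h0; norm_num at h0
    rw [h0, map_zero, zero_mul] at key
    have hcb : c ^ 2 + d ^ 2 * b = 0 := hAinj (by rw [key, map_zero])
    exact hb2 ⟨c / d, by field_simp; linear_combination hcb⟩
  · have hA0 : A (1 - 2 * c * d) ≠ 0 := fun h => h0 (hAinj (by rw [h, map_zero]))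
    have : g ∈ (algebraMap F F⟮x⟯).range := by
      refine ⟨(c ^ 2 + d ^ 2 * b) / (1 - 2 * c * d), ?_⟩
      rw [map_div₀, key]
      exact mul_div_cancel_left₀ g hA0
    have h1 : (minpoly F g).natDegree = 1 := minpoly.natDegree_eq_one_iff.mpr this
    rw [hming, natDegree_X_pow_sub_C] at h1
    norm_num at h1

end Helpers

/-- Let `F/ℚ₂` be a finite unramified extension, `b ∈ F` with `b ∉ F²` and `-b ∉ F²`, and
`β` a fourth root of `b` in an algebraic closure of `F`.  Then `F(β)/F` is not Galois. -/
theorem adjoin_fourth_root_not_galois (F : Type*) [Field F] [Algebra ℚ_[2] F]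
    [FiniteDimensional ℚ_[2] F]
    (hunram : maxIdeal 2 F = Ideal.span {(2 : ringOfInt 2 F)})
    (b : F) (hb1 : ¬∃ c : F, c ^ 2 = b) (hb2 : ¬∃ c : F, c ^ 2 = -b)
    (β : AlgebraicClosure F) (hβ : β ^ 4 = algebraMap F (AlgebraicClosure F) b) :
    ¬IsGalois F ↥(IntermediateField.adjoin F {β}) := by
  classical
  intro hgal
  letI : CharZero F := charZero_of_injective_algebraMap (algebraMap ℚ_[2] F).injective
  -- basic nonvanishing
  have hb0 : b ≠ 0 := fun h => hb1 ⟨0, by rw [h]; ring⟩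
  have hβ0 : β ≠ 0 := by
    intro h
    apply hb0
    have h2 : (0 : (AlgebraicClosure F)) = algebraMap F (AlgebraicClosure F) b := by rw [← hβ, h]; ring
    exact ((algebraMap F (AlgebraicClosure F)).injective (by rw [← h2, map_zero])).symm
  -- minimal polynomial of β is X^4 - b
  have hβroot : (Polynomial.aeval β) (X ^ 4 - C b) = 0 := by
    simp only [map_sub, map_pow, aeval_X, aeval_C]
    exact sub_eq_zero.mpr hβ
  have hmon : (X ^ 4 - C b : F[X]).Monic := monic_X_pow_sub_C b (by norm_num)
  have hirr : Irreducible (X ^ 4 - C b : F[X]) := quartic_irred b hb1 hb2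
  have hβint : IsIntegral F β := ⟨X ^ 4 - C b, hmon, by rw [← aeval_def]; exact hβroot⟩
  have hmin : minpoly F β = X ^ 4 - C b :=
    (minpoly.eq_of_irreducible_of_monic hirr hβroot hmon).symm
  set K := IntermediateField.adjoin F {β} with hK
  set B : K := AdjoinSimple.gen F β with hB
  have hBcoe : (algebraMap K (AlgebraicClosure F)) B = β := rfl
  haveI hfd : FiniteDimensional F K := adjoin.finiteDimensional hβint
  haveI : Algebra.IsAlgebraic F K := Algebra.IsAlgebraic.of_finite F K
  haveI : CharZero K := charZero_of_injective_algebraMap (algebraMap F K).injective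
  have hKinj : Function.Injective (algebraMap K (AlgebraicClosure F)) := (algebraMap K (AlgebraicClosure F)).injective
  have hminB : minpoly F B = X ^ 4 - C b := by
    rw [hB, minpoly_gen, hmin]
  have hB4 : B ^ 4 = algebraMap F K b := by
    apply hKinj
    rw [map_pow, hBcoe, hβ, ← IsScalarTower.algebraMap_apply]
  -- a square root of -1 in (AlgebraicClosure F)
  obtain ⟨i, hi2⟩ := IsAlgClosed.exists_pow_nat_eq (-1 : (AlgebraicClosure F)) (n := 2) (by norm_num)
  have hi4 : i ^ 4 = 1 := by
    rw [show (4 : ℕ) = 2 * 2 from rfl, pow_mul, hi2]; ring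
  -- i * β lies in K since K/F is normal
  have hnormal : Normal F K := hgal.to_normal
  have hsplits : Splits ((X ^ 4 - C b).map (algebraMap F K)) := by
    rw [← hminB]; exact hnormal.splits B
  have hiβ : ∃ c : K, (algebraMap K (AlgebraicClosure F)) c = i * β := by
    have hP0 : (X ^ 4 - C b : F[X]).map (algebraMap F (AlgebraicClosure F)) ≠ 0 :=
      Polynomial.map_ne_zero (X_pow_sub_C_ne_zero (by norm_num) b)
    have hroot : i * β ∈ ((X ^ 4 - C b : F[X]).map (algebraMap F (AlgebraicClosure F))).roots := by
      rw [mem_roots hP0]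
      show eval (i * β) _ = 0
      simp only [Polynomial.map_sub, Polynomial.map_pow, map_X, map_C, eval_sub, eval_pow,
        eval_X, eval_C, mul_pow, hi4, one_mul, hβ, sub_self]
    have hmapmap : (X ^ 4 - C b : F[X]).map (algebraMap F (AlgebraicClosure F)) =
        ((X ^ 4 - C b : F[X]).map (algebraMap F K)).map (algebraMap K (AlgebraicClosure F)) := by
      rw [Polynomial.map_map, ← IsScalarTower.algebraMap_eq]
    rw [hmapmap, hsplits.roots_map (algebraMap K (AlgebraicClosure F))] at hroot
    obtain ⟨c, _, hc⟩ := Multiset.mem_map.mp hroot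
    exact ⟨c, hc⟩
  obtain ⟨c0, hc0⟩ := hiβ
  set J : K := c0 * B⁻¹ with hJdef
  have hJcoe : (algebraMap K (AlgebraicClosure F)) J = i := by
    rw [hJdef, map_mul, map_inv₀, hc0, hBcoe]
    field_simp
  have hJ2 : J ^ 2 = -1 := by
    apply hKinj
    rw [map_pow, hJcoe, hi2, map_neg, map_one]
  have hJrange : J ∉ (algebraMap F K).range := by
    rintro ⟨t, ht⟩
    apply no_sqrt_neg_one F hunram t
    apply (algebraMap F K).injective
    rw [map_pow, ht, hJ2, map_neg, map_one]
  -- automorphisms moving B around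
  set pbK := adjoin.powerBasis hβint with hpbK
  have hpbgen : pbK.gen = B := rfl
  have hminpb : minpoly F pbK.gen = X ^ 4 - C b := by rw [hpbgen, hminB]
  have mk : ∀ y : K, y ^ 4 = algebraMap F K b → ∃ σ : K ≃ₐ[F] K, σ B = y := by
    intro y hy
    have hroot : (Polynomial.aeval y) (minpoly F pbK.gen) = 0 := by
      rw [hminpb]
      simp only [map_sub, map_pow, aeval_X, aeval_C, hy, sub_self]
    refine ⟨AlgEquiv.ofBijective (pbK.lift y hroot)
      (Algebra.IsAlgebraic.algHom_bijective _), ?_⟩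
    show (pbK.lift y hroot) B = y
    rw [← hpbgen]
    exact pbK.lift_gen y hroot
  have hJ4 : J ^ 4 = 1 := by
    rw [show (4 : ℕ) = 2 * 2 from rfl, pow_mul, hJ2]; ring
  obtain ⟨σ1, hσ1⟩ := mk (J * B) (by rw [mul_pow, hJ4, one_mul, hB4])
  obtain ⟨σ2, hσ2⟩ := mk (-B) (by rw [show ((-B) ^ 4 : K) = B ^ 4 from by ring, hB4])
  have hJpm : ∀ σ : K ≃ₐ[F] K, σ J = J ∨ σ J = -J := by
    intro σ
    have hσJ2 : (σ J) ^ 2 = -1 := by rw [← map_pow, hJ2, map_neg, map_one]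
    have h : (σ J - J) * (σ J + J) = 0 := by linear_combination hσJ2 - hJ2
    rcases mul_eq_zero.mp h with h | h
    · exact Or.inl (sub_eq_zero.mp h)
    · exact Or.inr (eq_neg_of_add_eq_zero_left h)
  have hρex : ∃ ρ : K ≃ₐ[F] K, ρ B = -B ∧ ρ J = J := by
    rcases hJpm σ2 with h | h
    · exact ⟨σ2, hσ2, h⟩
    · rcases hJpm σ1 with h1 | h1
      · refine ⟨σ1.trans σ1, ?_, ?_⟩
        · show σ1 (σ1 B) = -B
          rw [hσ1, map_mul, hσ1, h1, ← mul_assoc, ← sq, hJ2]; ring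
        · show σ1 (σ1 J) = J
          rw [h1, h1]
      · refine ⟨(σ1.trans σ2).trans (σ1.trans σ2), ?_, ?_⟩
        · show σ2 (σ1 (σ2 (σ1 B))) = -B
          rw [hσ1, map_mul, h, hσ2, neg_mul_neg, map_mul, h1, hσ1,
            show (-J * (J * B) : ↥K) = B from by linear_combination -B * hJ2, hσ2]
        · show σ2 (σ1 (σ2 (σ1 J))) = J
          rw [h1, map_neg, h, neg_neg, h1, map_neg, h, neg_neg]
  obtain ⟨ρ, hρB, hρJ⟩ := hρex
  have hBne : B ≠ 0 := by
    intro h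
    apply hβ0
    rw [← hBcoe, h, map_zero]
  have hρne : ρ ≠ 1 := by
    intro h
    rw [h] at hρB
    simp only [AlgEquiv.one_apply] at hρB
    exact hBne (by linear_combination (1 / 2 : K) * hρB)
  have hρ2 : ρ ^ 2 = 1 := by
    apply AlgEquiv.coe_algHom_injective
    apply PowerBasis.algHom_ext pbK
    show (ρ ^ 2) pbK.gen = (1 : K ≃ₐ[F] K) pbK.gen
    rw [hpbgen, sq, AlgEquiv.mul_apply, hρB, map_neg, hρB, neg_neg, AlgEquiv.one_apply]
  have hord : orderOf ρ = 2 := orderOf_eq_prime hρ2 hρne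
  set H := Subgroup.zpowers ρ with hHdef
  have hcardH : Fintype.card H = 2 := by
    rw [Fintype.card_zpowers, hord]
  set E := IntermediateField.fixedField H with hEdef
  have hfix : ∀ x : K, ρ x = x → x ∈ E := by
    intro x hx
    intro g
    obtain ⟨k, hk⟩ := g.2
    have hρS : ρ ∈ MulAction.stabilizer (K ≃ₐ[F] K) x := hx
    have : (g : K ≃ₐ[F] K) ∈ MulAction.stabilizer (K ≃ₐ[F] K) x := by
      rw [← hk]
      exact Subgroup.zpow_mem _ hρS k
    exact this
  have hJE : J ∈ E := hfix J hρJ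
  have hB2E : B ^ 2 ∈ E := hfix (B ^ 2) (by rw [map_pow, hρB]; ring)
  have hfEK : finrank ↥E ↥K = 2 := by
    rw [hEdef, finrank_fixedField_eq_card, Nat.card_eq_fintype_card, hcardH]
  have hK4 : finrank F ↥K = 4 := by
    rw [hK, adjoin.finrank hβint, hmin, natDegree_X_pow_sub_C]
  have hFE : finrank F ↥E = 2 := by
    have hm : finrank F ↥E * finrank ↥E ↥K = finrank F ↥K := Module.finrank_mul_finrank F ↥E ↥K
    rw [hfEK, hK4] at hm
    omega
  -- the quadratic subfield F(J)
  have hJint : IsIntegral F J := IsIntegral.of_finite F J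
  have hminJdeg : (minpoly F J).natDegree = 2 := by
    have hdvd : minpoly F J ∣ X ^ 2 + C 1 := minpoly.dvd F J (by
      simp only [map_add, map_pow, aeval_X, aeval_C, hJ2, map_one]; ring)
    have hle : (minpoly F J).natDegree ≤ 2 := by
      have h1 := Polynomial.natDegree_le_of_dvd hdvd (X_pow_add_C_ne_zero (by norm_num) 1)
      rwa [natDegree_X_pow_add_C] at h1
    have h2le : 2 ≤ (minpoly F J).natDegree := (minpoly.two_le_natDegree_iff hJint).mpr hJrange
    omega
  set L := IntermediateField.adjoin F {J} with hLdef
  have hLE : L ≤ E := by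
    rw [hLdef, adjoin_le_iff]
    exact Set.singleton_subset_iff.mpr hJE
  have hLrank : finrank F ↥L = 2 := by
    rw [hLdef, adjoin.finrank hJint, hminJdeg]
  have hLeq : L = E := IntermediateField.eq_of_le_of_finrank_le hLE (by rw [hFE, hLrank])
  have hB2L : B ^ 2 ∈ L := by rw [hLeq]; exact hB2E
  -- write B^2 = c + d J and derive a contradiction
  set pbL := adjoin.powerBasis hJint with hpbL
  have hpbLdim : pbL.dim = 2 := by
    rw [hpbL, adjoin.powerBasis_dim, hminJdeg]
  obtain ⟨c, d, hcd⟩ := quad_extract pbL hpbLdim ⟨B ^ 2, hB2L⟩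
  have hcd' : B ^ 2 = algebraMap F K c + d • J := by
    have h1 := congrArg (IntermediateField.adjoin F {J}).val hcd
    rw [map_add, AlgHom.commutes, AlgHom.map_smul_of_tower] at h1
    exact h1
  set A := algebraMap F K with hA
  have hAinj : Function.Injective A := (algebraMap F K).injective
  have hmain : A (b - c ^ 2 + d ^ 2) = A (2 * c * d) * J := by
    have h1 : (A c + A d * J) ^ 2 = A b := by
      rw [← Algebra.smul_def, ← hcd', ← pow_mul, ← hB4]
    simp only [map_sub, map_add, map_mul, map_pow, map_ofNat]
    linear_combination -h1 + (A d) ^ 2 * hJ2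
  rcases eq_or_ne (2 * c * d) 0 with h0 | h0
  · have hcd0 : c = 0 ∨ d = 0 := by
      have : (2 : F) * (c * d) = 0 := by linear_combination h0
      rcases mul_eq_zero.mp this with h | h
      · norm_num at h
      · exact mul_eq_zero.mp h
    rcases hcd0 with rfl | rfl
    · -- B^2 = d • J, so b = -d^2
      apply hb2
      refine ⟨d, ?_⟩
      rw [h0, map_zero, zero_mul] at hmain
      have h2 : b - 0 ^ 2 + d ^ 2 = 0 := hAinj (by rw [hmain, map_zero])
      linear_combination h2
    · -- B^2 = A c, so b = c^2
      apply hb1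
      refine ⟨c, ?_⟩
      rw [h0, map_zero, zero_mul] at hmain
      have h2 : b - c ^ 2 + 0 ^ 2 = 0 := hAinj (by rw [hmain, map_zero])
      linear_combination -h2
  · apply hJrange
    have hA0 : A (2 * c * d) ≠ 0 := fun h => h0 (hAinj (by rw [h, map_zero]))
    refine ⟨(b - c ^ 2 + d ^ 2) / (2 * c * d), ?_⟩
    rw [map_div₀, hmain]
    exact mul_div_cancel_left₀ J hA0
end

section
/- Let K be a field, n ≥ 2 an integer, and a ∈ K. Suppose a ∉ K^p for every prime p dividing n, and additionally a ∉ −4K⁴ if 4 divides n. Then the polynomial x^n − a is irreducible in K[x]. -/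
open Polynomial IntermediateField

universe u

section Capelli

variable {K E : Type*} [Field K] [Field E] [Algebra K E]

lemma capelli_lin_indep {x : E} (hx : x ∉ Set.range (algebraMap K E))
    {s t : K} (h : algebraMap K E s + algebraMap K E t * x = 0) : s = 0 ∧ t = 0 := by
  by_cases ht : t = 0
  · subst ht
    simp only [map_zero, zero_mul, add_zero] at h
    exact ⟨(algebraMap K E).injective (by simpa using h), rfl⟩
  · exfalso
    apply hx
    refine ⟨-s / t, ?_⟩
    have ht' : algebraMap K E t ≠ 0 :=
      fun hh => ht ((algebraMap K E).injective (by simpa using hh))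
    rw [map_div₀, map_neg]
    field_simp
    linear_combination -h

lemma capelli_key {a : K}
    (h1 : ∀ b : K, b ^ 2 ≠ a) (h2 : ∀ b : K, a ≠ -4 * b ^ 4)
    {x : E} (hx2 : x ^ 2 = algebraMap K E a) {ε : K} (hε : ε = 1 ∨ ε = -1)
    (u v : K) (h : (algebraMap K E u + algebraMap K E v * x) ^ 2 = algebraMap K E ε * x) :
    False := by
  have hxr : x ∉ Set.range (algebraMap K E) := by
    rintro ⟨w, rfl⟩
    exact h1 w ((algebraMap K E).injective (by rw [map_pow, hx2]))
  have key : algebraMap K E (u ^ 2 + a * v ^ 2) + algebraMap K E (2 * u * v - ε) * x = 0 := by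
    simp only [map_add, map_mul, map_sub, map_pow, map_ofNat]
    linear_combination h - (algebraMap K E v) ^ 2 * hx2
  obtain ⟨hs, ht⟩ := capelli_lin_indep hxr key
  have huv : 2 * u * v = ε := by linear_combination ht
  have hε2 : ε ^ 2 = 1 := by rcases hε with rfl | rfl <;> norm_num
  exact h2 u (by linear_combination 4 * u ^ 2 * hs - a * hε2 - a * (2 * u * v + ε) * huv)

lemma capelli_decomp {a : K} (h1 : ∀ b : K, b ^ 2 ≠ a)
    {x : E} (hx2 : x ^ 2 = algebraMap K E a) {c : E} (hc : c ∈ K⟮x⟯) :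
    ∃ u v : K, c = algebraMap K E u + algebraMap K E v * x := by
  induction hc using IntermediateField.adjoin_induction with
  | mem y hy =>
    rw [Set.mem_singleton_iff] at hy
    exact ⟨0, 1, by simp [hy]⟩
  | algebraMap w => exact ⟨w, 0, by simp⟩
  | add y z _ _ hy hz =>
    obtain ⟨u, v, rfl⟩ := hy
    obtain ⟨u', v', rfl⟩ := hz
    exact ⟨u + u', v + v', by simp only [map_add]; ring⟩
  | mul y z _ _ hy hz =>
    obtain ⟨u, v, rfl⟩ := hy
    obtain ⟨u', v', rfl⟩ := hz
    refine ⟨u * u' + a * v * v', u * v' + u' * v, ?_⟩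
    simp only [map_add, map_mul]
    linear_combination (algebraMap K E v * algebraMap K E v') * hx2
  | inv y _ hy =>
    obtain ⟨u, v, rfl⟩ := hy
    by_cases hy0 : algebraMap K E u + algebraMap K E v * x = 0
    · exact ⟨0, 0, by simp [hy0]⟩
    · set d := u ^ 2 - a * v ^ 2 with hd_def
      have hd : d ≠ 0 := by
        intro hd0
        by_cases hv : v = 0
        · apply hy0
          have hu : u = 0 := by
            have : u ^ 2 = 0 := by rw [hd_def] at hd0; rw [hv] at hd0; linear_combination hd0
            exact pow_eq_zero_iff (by norm_num) |>.mp this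
          simp [hu, hv]
        · exact h1 (u / v) (by field_simp; linear_combination hd0)
      have hφd : algebraMap K E d ≠ 0 :=
        fun hh => hd ((algebraMap K E).injective (by simpa using hh))
      have hmul : ((algebraMap K E) u + (algebraMap K E) v * x) *
          ((algebraMap K E) u - (algebraMap K E) v * x) = algebraMap K E d := by
        rw [hd_def, map_sub, map_mul, map_pow, map_pow]
        linear_combination (-(algebraMap K E v) ^ 2) * hx2
      refine ⟨u / d, -v / d, inv_eq_of_mul_eq_one_right ?_⟩
      rw [map_div₀, map_div₀, map_neg]
      rw [div_eq_mul_inv, div_eq_mul_inv, neg_mul, ← neg_mul]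
      have : (algebraMap K E) u * ((algebraMap K E) d)⁻¹ +
          -(algebraMap K E) v * ((algebraMap K E) d)⁻¹ * x =
          ((algebraMap K E) u - (algebraMap K E) v * x) * ((algebraMap K E) d)⁻¹ := by ring
      rw [this, ← mul_assoc, hmul, mul_inv_cancel₀ hφd]

end Capelli

set_option synthInstance.maxHeartbeats 1000000 in
/-- Irreducibility of `X ^ 2 ^ k - a`. -/
theorem capelli_two_pow (k : ℕ) {K : Type u} [Field K] {a : K}
    (h1 : ∀ b : K, b ^ 2 ≠ a) (h2 : 2 ≤ k → ∀ b : K, a ≠ -4 * b ^ 4) :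
    Irreducible ((X : K[X]) ^ 2 ^ k - C a) := by
  match k, h2 with
  | 0, _ => simpa using irreducible_X_sub_C a
  | 1, _ => simpa using X_pow_sub_C_irreducible_of_prime Nat.prime_two h1
  | (k+2), h2 =>
    have h2' : ∀ b : K, a ≠ -4 * b ^ 4 := h2 (by omega)
    rw [pow_succ]
    apply X_pow_mul_sub_C_irreducible (X_pow_sub_C_irreducible_of_prime Nat.prime_two h1)
    intro E _ _ x hx
    have hx2 : x ^ 2 = algebraMap K E a := by
      have h0 := minpoly.aeval K x
      rw [hx] at h0
      simpa [sub_eq_zero] using h0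
    apply capelli_two_pow (k + 1) ?_ ?_
    · -- gen is not a square in K⟮x⟯
      intro c hc
      have hcE : ((c : E)) ^ 2 = x := by
        have := congrArg (algebraMap K⟮x⟯ E) hc
        rwa [map_pow, AdjoinSimple.algebraMap_gen] at this
      obtain ⟨u, v, hdec⟩ := capelli_decomp h1 hx2 c.2
      exact capelli_key h1 h2' hx2 (Or.inl rfl) u v
        (by rw [map_one, one_mul, ← hdec]; exact hcE)
    · -- gen ∉ -4 K⟮x⟯⁴
      intro _ c hc
      have hcE : x = -4 * (c : E) ^ 4 := by
        have h' := congrArg (algebraMap K⟮x⟯ E) hc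
        rwa [AdjoinSimple.algebraMap_gen, map_mul, map_neg, map_ofNat, map_pow] at h'
      have h2mem : (2 : E) ∈ K⟮x⟯ := by
        have := IntermediateField.algebraMap_mem K⟮x⟯ (2 : K)
        rwa [map_ofNat] at this
      have hmem : 2 * (c : E) ^ 2 ∈ K⟮x⟯ := mul_mem h2mem (pow_mem c.2 2)
      obtain ⟨u, v, hdec⟩ := capelli_decomp h1 hx2 hmem
      exact capelli_key h1 h2' hx2 (Or.inr rfl) u v
        (by rw [← hdec, map_neg, map_one]; linear_combination hcE)

open Polynomial in
/-- **Capelli's lemma.** Let `K` be a field, `n ≥ 2`, `a ∈ K`. If `a ∉ K^q` for every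
prime `q` dividing `n`, and moreover `a ∉ -4K⁴` whenever `4 ∣ n`, then `X^n - a` is
irreducible over `K`. -/
theorem capelli_irreducible {K : Type*} [Field K] (n : ℕ) (hn : 2 ≤ n) (a : K)
    (h1 : ∀ q : ℕ, q.Prime → q ∣ n → ¬∃ b : K, b ^ q = a)
    (h2 : 4 ∣ n → ¬∃ b : K, a = -4 * b ^ 4) :
    Irreducible ((X : K[X]) ^ n - C a) := by

  have hn0 : n ≠ 0 := by omega
  set k := n.factorization 2 with hk
  set m := n / 2 ^ k with hm
  have hmn : 2 ^ k * m = n := Nat.ordProj_mul_ordCompl_eq_self n 2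
  have hnd : ¬ 2 ∣ m := Nat.not_dvd_ordCompl Nat.prime_two hn0
  have hm_odd : Odd m := Nat.odd_iff.mpr (Nat.two_dvd_ne_zero.mp hnd)
  have hmdvd : m ∣ n := Dvd.intro_left _ hmn
  by_cases hk0 : k = 0
  · have hodd : Odd n := by rw [← hmn, hk0]; simpa using hm_odd
    apply X_pow_sub_C_irreducible_of_odd hodd
    intro p hp hpn b hb
    exact h1 p hp hpn ⟨b, hb⟩
  · have h2k : (2 : ℕ) ^ k ∣ n := ⟨m, hmn.symm⟩
    have ha2 : ∀ b : K, b ^ 2 ≠ a :=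
      fun b hb => h1 2 Nat.prime_two (dvd_trans (dvd_pow_self 2 hk0) h2k) ⟨b, hb⟩
    have ha4 : 2 ≤ k → ∀ b : K, a ≠ -4 * b ^ 4 := by
      intro hk2 b hb
      exact h2 (dvd_trans (by norm_num : (4:ℕ) ∣ 2 ^ 2) (dvd_trans (pow_dvd_pow 2 hk2) h2k))
        ⟨b, hb⟩
    rw [← hmn, mul_comm]
    apply X_pow_mul_sub_C_irreducible (capelli_two_pow k ha2 ha4)
    intro E _ _ x hx
    have h2kpos : 0 < 2 ^ k := Nat.pow_pos (by norm_num)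
    have hint : IsIntegral K x := not_not.mp fun h ↦ by
      simpa only [degree_zero, degree_X_pow_sub_C h2kpos,
        WithBot.natCast_ne_bot] using congr_arg degree (hx.symm.trans (dif_neg h))
    apply X_pow_sub_C_irreducible_of_odd hm_odd
    intro q hq hqm b hb
    have hq2 : q ≠ 2 := fun h => hnd (h ▸ hqm)
    have hqodd : Odd q := hq.odd_of_ne_two hq2
    apply h1 q hq (dvd_trans hqm hmdvd)
    refine ⟨-(Algebra.norm K b), ?_⟩
    have hNb : (Algebra.norm K b) ^ q = -a := by
      rw [← map_pow, hb, ← IntermediateField.adjoin.powerBasis_gen hint,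
        Algebra.PowerBasis.norm_gen_eq_coeff_zero_minpoly]
      simp [IntermediateField.minpoly_gen, hx, coeff_X_pow, h2kpos.ne',
        Even.neg_one_pow (Nat.even_pow.mpr ⟨even_two, hk0⟩), h2kpos.ne]
    rw [hqodd.neg_pow, hNb, neg_neg]
end
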